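/- Let K be a field of characteristic zero, p an odd prime, and A, B, C integers with BC ≠ 0. If x, y, z ∈ K satisfy A x^p + B y^p + C z^p = 0 and x ≠ 0, then the elements X = −BC·y·z/x² and Y = (−BC)^{(p−1)/2}·(B y^p − C z^p)/(2 x^p) of K satisfy Y² = X^p + A²(BC)^{p−1}/4. -/

import Mathlib

/-- Let `K` be a field of characteristic zero, `p` an odd prime, and `A, B, C` integers
with `BC ≠ 0`.  If `x, y, z ∈ K` satisfy `A x^p + B y^p + C z^p = 0` and `x ≠ 0`, then the
elements `X = −BC·y·z/x²` and `Y = (−BC)^((p−1)/2)·(B y^p − C z^p)/(2 x^p)` of `K`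
satisfy `Y² = X^p + A²(BC)^(p−1)/4`. -/
theorem stmt_11 (K : Type*) [Field K] [CharZero K]
    (p : ℕ) (hp : p.Prime) (hodd : Odd p)
    (A B C : ℤ) (hBC : B * C ≠ 0)
    (x y z : K) (heq : (A : K) * x ^ p + (B : K) * y ^ p + (C : K) * z ^ p = 0)
    (hx : x ≠ 0) :
    ((((-(B * C)) ^ ((p - 1) / 2) : ℤ) : K) * ((B : K) * y ^ p - (C : K) * z ^ p)
        / (2 * x ^ p)) ^ 2
      = (((-(B * C) : ℤ) : K) * y * z / x ^ 2) ^ p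
        + ((A : K) ^ 2 * (((B * C) ^ (p - 1) : ℤ) : K)) / 4 := by
  obtain ⟨k, hk⟩ := hodd
  subst hk
  have h1 : (2 * k + 1 - 1) / 2 = k := by omega
  rw [h1]
  have h2 : 2 * k + 1 - 1 = 2 * k := by omega
  rw [h2]
  have hA : (A : K) * x ^ (2 * k + 1) = -((B : K) * y ^ (2 * k + 1) + (C : K) * z ^ (2 * k + 1)) := by
    linear_combination heq
  have hxp : x ^ (2 * k + 1) ≠ 0 := pow_ne_zero _ hx
  have hm1 : ((-1 : K)) ^ (k*2) = 1 := by
    rw [mul_comm, pow_mul]; norm_num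
  push_cast
  field_simp
  have hX : (-((B:K) * C * y * z / x ^ 2)) ^ (2 * k + 1) * (x ^ (2 * k + 1)) ^ 2 = -(((B:K) * C) ^ (2 * k + 1) * y ^ (2 * k + 1) * z ^ (2 * k + 1)) := by
    rw [Odd.neg_pow ⟨k, rfl⟩, div_pow, ← pow_mul, ← pow_mul]
    field_simp
    ring
  linear_combination (-16:K) * hX + (4 * ((B:K)*C)^(2*k) * ((B:K)*y^(2*k+1) - (C:K)*z^(2*k+1))^2) * hm1 - (4 * ((B:K)*C)^(2*k) * ((A:K) * x^(2*k+1) - (B:K)*y^(2*k+1) - (C:K)*z^(2*k+1))) * heq
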